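/- In the group S₃^ℤ with presentation ⟨σ₁, σ₂ ∣ σ₁σ₂σ₁ = σ₂σ₁σ₂, σ₁² = σ₂²⟩, the element σ₁² has infinite order; equivalently, the cyclic subgroup of S₃^ℤ generated by σ₁² is infinite. -/

import Mathlib

/-- Relators of the group `S₃^ℤ`: `σ₁σ₂σ₁σ₂⁻¹σ₁⁻¹σ₂⁻¹` and `σ₁²σ₂⁻²`. -/
def S3ZRels : Set (FreeGroup (Fin 2)) :=
  { FreeGroup.of 0 * FreeGroup.of 1 * FreeGroup.of 0 *
      (FreeGroup.of 1)⁻¹ * (FreeGroup.of 0)⁻¹ * (FreeGroup.of 1)⁻¹,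
    FreeGroup.of 0 ^ 2 * (FreeGroup.of 1 ^ 2)⁻¹ }

noncomputable def S3Zdeg : PresentedGroup S3ZRels →* Multiplicative ℤ :=
  PresentedGroup.toGroup (f := fun _ => Multiplicative.ofAdd (1 : ℤ)) (by
    intro r hr
    rcases hr with h | h <;> subst h <;> simp)

lemma s3z_not_fin : ¬ IsOfFinOrder ((PresentedGroup.of 0 : PresentedGroup S3ZRels) ^ 2) := by
  intro h
  have h2 := S3Zdeg.isOfFinOrder h
  rw [map_pow] at h2
  have : S3Zdeg (PresentedGroup.of 0) = Multiplicative.ofAdd (1 : ℤ) :=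
    PresentedGroup.toGroup.of _
  rw [this] at h2
  have := h2.orderOf_pos
  rw [orderOf_eq_zero_iff.2 ?_] at this
  · exact lt_irrefl 0 this
  · intro hfin
    obtain ⟨n, hn, e⟩ := hfin.exists_pow_eq_one
    have : ((2 : ℤ) * n) = 0 := by
      have := congrArg Multiplicative.toAdd e
      simp only [toAdd_pow, toAdd_ofAdd, toAdd_one, nsmul_eq_mul, smul_eq_mul] at this
      push_cast at this
      linarith
    omega

theorem stmt_10 :
    ¬ IsOfFinOrder ((PresentedGroup.of 0 : PresentedGroup S3ZRels) ^ 2) ∧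
      Infinite (Subgroup.zpowers ((PresentedGroup.of 0 : PresentedGroup S3ZRels) ^ 2)) := by
  refine ⟨s3z_not_fin, ?_⟩
  have := infinite_zpowers.2 s3z_not_fin
  exact Set.infinite_coe_iff.2 this
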